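/- Let p be an odd prime and let ν_p = max over γ ∈ F_p \ {1} of the cardinality of {1 ≤ i ≤ p−2 : γ^{i+1} = i(1−γ) + 1 in F_p}. Then 0 ≤ ν_p ≤ √(3p/2 − 39/16) + 5/4 (as an inequality of real numbers). -/

import Mathlib

open Polynomial Finset

noncomputable def carlitzChain {F : Type*} [Field F] (q : ℕ) (a : ℕ → F) : ℕ → F[X]
  | 0 => C (a 0) * X + C (a 1)
  | n + 1 => carlitzChain q a n ^ (q - 2) + C (a (n + 2))

/-- `f` is congruent mod `X^q - X` to a Carlitz chain of length `n`. -/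
def IsCarlitzRep {F : Type*} [Field F] (q : ℕ) (f : F[X]) (n : ℕ) : Prop :=
  ∃ a : ℕ → F, a 0 ≠ 0 ∧ (∀ i, 2 ≤ i → i ≤ n → a i ≠ 0) ∧
    (X ^ q - X : F[X]) ∣ f - carlitzChain q a n

/-- The Carlitz rank of a permutation polynomial. -/
noncomputable def carlitzRank {F : Type*} [Field F] (q : ℕ) (f : F[X]) : ℕ :=
  sInf {n | IsCarlitzRep q f n}

/-- The weight: number of nonzero coefficients of the reduction of `f` mod `X^q - X`. -/
noncomputable def polyWeight {F : Type*} [Field F] (q : ℕ) (f : F[X]) : ℕ :=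
  (f %ₘ (X ^ q - X)).support.card

/-- `ν_p` from the paper. -/
noncomputable def nuP (p : ℕ) [Fact p.Prime] : ℕ :=
  Finset.sup (Finset.univ.erase (1 : ZMod p)) fun γ =>
    ((Finset.Icc 1 (p - 2)).filter
      (fun i : ℕ => γ ^ (i + 1) = (i : ZMod p) * (1 - γ) + 1)).card


private lemma sidon_ET (N l : ℕ) (A : Finset ℕ)
    (hA : ∀ a ∈ A, 1 ≤ a ∧ a ≤ N)
    (hS : ∀ a ∈ A, ∀ b ∈ A, ∀ c ∈ A, ∀ d ∈ A,
      a < b → c < d → b - a = d - c → a = c) :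
    (l + 1) * A.card ^ 2 ≤ (N + l) * (l + A.card) := by
  classical
  set T := N + l with hT
  have h1 : ∀ a ∈ A, ((range T).filter (fun t => a ≤ t + 1 ∧ t + 1 ≤ a + l)).card = l + 1 := by
    intro a ha
    obtain ⟨ha1, haN⟩ := hA a ha
    have : (range T).filter (fun t => a ≤ t + 1 ∧ t + 1 ≤ a + l) = Icc (a - 1) (a + l - 1) := by
      ext t
      simp only [mem_filter, mem_range, mem_Icc, hT]
      omega
    rw [this, Nat.card_Icc]
    omega
  have h2 : ∀ a ∈ A, ∀ b ∈ A, a ≤ b →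
      ((range T).filter (fun t => (a ≤ t + 1 ∧ t + 1 ≤ a + l) ∧ (b ≤ t + 1 ∧ t + 1 ≤ b + l))).card
        = a + l + 1 - b := by
    intro a ha b hb hab
    obtain ⟨ha1, haN⟩ := hA a ha
    obtain ⟨hb1, hbN⟩ := hA b hb
    have : (range T).filter (fun t => (a ≤ t + 1 ∧ t + 1 ≤ a + l) ∧ (b ≤ t + 1 ∧ t + 1 ≤ b + l))
        = Icc (b - 1) (a + l - 1) := by
      ext t
      simp only [mem_filter, mem_range, mem_Icc, hT]
      omega
    rw [this, Nat.card_Icc]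
    omega
  set f : ℕ → ℕ := fun t => (A.filter (fun a => a ≤ t + 1 ∧ t + 1 ≤ a + l)).card with hf
  have S1 : ∑ t ∈ range T, f t = A.card * (l + 1) := by
    simp only [hf, card_filter]
    rw [Finset.sum_comm]
    rw [Finset.sum_congr rfl (fun a ha => ?_), Finset.sum_const, smul_eq_mul]
    rw [← card_filter]
    exact h1 a ha
  have S2 : ∑ t ∈ range T, f t ^ 2 ≤ A.card * (l + 1) + (l + 1) * l := by
    have expand : ∑ t ∈ range T, f t ^ 2
        = ∑ p ∈ A ×ˢ A, (min p.1 p.2 + l + 1 - max p.1 p.2) := by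
      have key : ∀ t, f t ^ 2 = ∑ p ∈ A ×ˢ A,
          (if (p.1 ≤ t + 1 ∧ t + 1 ≤ p.1 + l) ∧ (p.2 ≤ t + 1 ∧ t + 1 ≤ p.2 + l) then 1 else 0) := by
        intro t
        rw [Finset.sum_product]
        simp only [hf, card_filter, sq]
        rw [Finset.sum_mul_sum]
        refine Finset.sum_congr rfl fun a _ => Finset.sum_congr rfl fun b _ => ?_
        by_cases h : a ≤ t + 1 ∧ t + 1 ≤ a + l <;> by_cases h' : b ≤ t + 1 ∧ t + 1 ≤ b + l <;>
          split_ifs <;> omega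
      simp only [key]
      rw [Finset.sum_comm]
      refine Finset.sum_congr rfl fun p hp => ?_
      obtain ⟨hp1, hp2⟩ := Finset.mem_product.mp hp
      rw [← card_filter]
      rcases le_total p.1 p.2 with h | h
      · rw [h2 p.1 hp1 p.2 hp2 h]
        rw [min_eq_left h, max_eq_right h]
      · have e : (range T).filter
            (fun t => (p.1 ≤ t + 1 ∧ t + 1 ≤ p.1 + l) ∧ (p.2 ≤ t + 1 ∧ t + 1 ≤ p.2 + l))
            = (range T).filter
            (fun t => (p.2 ≤ t + 1 ∧ t + 1 ≤ p.2 + l) ∧ (p.1 ≤ t + 1 ∧ t + 1 ≤ p.1 + l)) := by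
          ext t; simp only [mem_filter]; tauto
        rw [e, h2 p.2 hp2 p.1 hp1 h, min_eq_right h, max_eq_left h]
    rw [expand, ← Finset.diag_union_offDiag A, Finset.sum_union (Finset.disjoint_diag_offDiag A)]
    have Sdiag : ∑ p ∈ A.diag, (min p.1 p.2 + l + 1 - max p.1 p.2) = A.card * (l + 1) := by
      rw [Finset.sum_diag]
      have : ∀ a ∈ A, min a a + l + 1 - max a a = l + 1 := by
        intro a _; rw [min_self, max_self]; omega
      rw [Finset.sum_congr rfl this, Finset.sum_const, smul_eq_mul]
    rw [Sdiag]
    -- bound the off-diagonal sum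
    have Soff : ∑ p ∈ A.offDiag, (min p.1 p.2 + l + 1 - max p.1 p.2) ≤ (l + 1) * l := by
      rw [← Finset.sum_filter_add_sum_filter_not A.offDiag (fun p => p.1 < p.2)]
      set P := A.offDiag.filter (fun p => p.1 < p.2) with hP
      have hswap : ∑ p ∈ A.offDiag.filter (fun p => ¬ p.1 < p.2),
          (min p.1 p.2 + l + 1 - max p.1 p.2) = ∑ p ∈ P, (min p.1 p.2 + l + 1 - max p.1 p.2) := by
        refine Finset.sum_nbij' (fun p => Prod.swap p) (fun p => Prod.swap p) ?_ ?_ ?_ ?_ ?_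
        · intro p hp
          simp only [Finset.mem_filter, Finset.mem_offDiag, hP] at hp ⊢
          obtain ⟨⟨m1, m2, mne⟩, hlt⟩ := hp
          exact ⟨⟨m2, m1, Ne.symm mne⟩, by simp only [Prod.fst_swap, Prod.snd_swap]; omega⟩
        · intro p hp
          simp only [Finset.mem_filter, Finset.mem_offDiag, hP] at hp ⊢
          obtain ⟨⟨m1, m2, mne⟩, hlt⟩ := hp
          exact ⟨⟨m2, m1, Ne.symm mne⟩, by simp only [Prod.fst_swap, Prod.snd_swap]; omega⟩
        · intro p _; exact Prod.swap_swap p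
        · intro p _; exact Prod.swap_swap p
        · intro p _
          simp [min_comm, max_comm]
      rw [hswap]
      have hinj : Set.InjOn (fun p : ℕ × ℕ => p.2 - p.1) P := by
        intro p hp q hq hpq
        simp only [hP, Finset.mem_coe, Finset.mem_filter, Finset.mem_offDiag] at hp hq
        obtain ⟨⟨p1, p2, -⟩, plt⟩ := hp
        obtain ⟨⟨q1, q2, -⟩, qlt⟩ := hq
        have hpq' : p.2 - p.1 = q.2 - q.1 := hpq
        have h1 : p.1 = q.1 := hS p.1 p1 p.2 p2 q.1 q1 q.2 q2 plt qlt hpq'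
        have h2 : p.2 = q.2 := by omega
        have this := h1
        exact Prod.ext this h2
      have himg : ∑ p ∈ P, (min p.1 p.2 + l + 1 - max p.1 p.2)
          = ∑ d ∈ P.image (fun p => p.2 - p.1), (l + 1 - d) := by
        rw [Finset.sum_image (fun p hp q hq h => hinj hp hq h)]
        refine Finset.sum_congr rfl fun p hp => ?_
        simp only [hP, Finset.mem_filter] at hp
        have hlt : p.1 < p.2 := hp.2
        rw [min_eq_left hlt.le, max_eq_right hlt.le]
        omega
      have hsub : ∑ d ∈ P.image (fun p => p.2 - p.1), (l + 1 - d)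
          ≤ ∑ d ∈ Icc 1 l, (l + 1 - d) := by
        rw [← Finset.sum_filter_add_sum_filter_not (P.image (fun p => p.2 - p.1)) (fun d => d ≤ l)]
        have z : ∑ d ∈ (P.image (fun p => p.2 - p.1)).filter (fun d => ¬ d ≤ l), (l + 1 - d) = 0 := by
          refine Finset.sum_eq_zero fun d hd => ?_
          simp only [Finset.mem_filter] at hd
          omega
        rw [z, add_zero]
        refine Finset.sum_le_sum_of_subset ?_
        intro d hd
        simp only [Finset.mem_filter, Finset.mem_image, hP, Finset.mem_Icc] at hd ⊢
        obtain ⟨⟨p, hp, hpd⟩, hdl⟩ := hd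
        have hpd' : p.2 - p.1 = d := hpd
        have hlt : p.1 < p.2 := hp.2
        omega
      have gauss : ∑ d ∈ Icc 1 l, (l + 1 - d) = ∑ d ∈ Icc 1 l, d := by
        refine Finset.sum_nbij' (fun d => l + 1 - d) (fun d => l + 1 - d) ?_ ?_ ?_ ?_ ?_
        · intro d hd; simp only [Finset.mem_Icc] at hd ⊢; omega
        · intro d hd; simp only [Finset.mem_Icc] at hd ⊢; omega
        · intro d hd; simp only [Finset.mem_Icc] at hd; show l + 1 - (l + 1 - d) = d; omega
        · intro d hd; simp only [Finset.mem_Icc] at hd; show l + 1 - (l + 1 - d) = d; omega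
        · intro d hd; simp only [Finset.mem_Icc] at hd; show l + 1 - d = l + 1 - d; rfl
      have gauss2 : (∑ d ∈ Icc 1 l, d) * 2 = l * (l + 1) := by
        have h : ∑ d ∈ Icc 1 l, d = ∑ d ∈ range (l + 1), d := by
          rw [Finset.sum_range_succ']
          rw [Finset.range_eq_Ico, ← Finset.Ico_add_one_right_eq_Icc, Finset.sum_Ico_eq_sum_range]
          simp [add_comm]
        rw [h, Finset.sum_range_id_mul_two]
        simp [Nat.succ_sub_one, mul_comm]
      calc ∑ p ∈ P, (min p.1 p.2 + l + 1 - max p.1 p.2)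
            + ∑ p ∈ P, (min p.1 p.2 + l + 1 - max p.1 p.2)
          = (∑ d ∈ P.image (fun p => p.2 - p.1), (l + 1 - d))
            + (∑ d ∈ P.image (fun p => p.2 - p.1), (l + 1 - d)) := by rw [himg]
        _ ≤ (∑ d ∈ Icc 1 l, (l + 1 - d)) + (∑ d ∈ Icc 1 l, (l + 1 - d)) := add_le_add hsub hsub
        _ = (∑ d ∈ Icc 1 l, d) * 2 := by rw [gauss]; ring
        _ = l * (l + 1) := gauss2
        _ = (l + 1) * l := mul_comm _ _
    exact Nat.add_le_add_left Soff _
  -- Cauchy–Schwarz over ℤ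
  have CS : ((∑ t ∈ range T, f t : ℕ) : ℤ) ^ 2 ≤ (T : ℤ) * ∑ t ∈ range T, ((f t : ℤ)) ^ 2 := by
    have := sq_sum_le_card_mul_sum_sq (s := range T) (f := fun t => ((f t : ℕ) : ℤ))
    simpa using this
  have main : ((A.card * (l + 1) : ℕ) : ℤ) ^ 2 ≤ (T : ℤ) * ((A.card * (l + 1) + (l + 1) * l : ℕ) : ℤ) := by
    calc ((A.card * (l + 1) : ℕ) : ℤ) ^ 2 = ((∑ t ∈ range T, f t : ℕ) : ℤ) ^ 2 := by rw [S1]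
    _ ≤ (T : ℤ) * ∑ t ∈ range T, ((f t : ℤ)) ^ 2 := CS
    _ = (T : ℤ) * ((∑ t ∈ range T, f t ^ 2 : ℕ) : ℤ) := by push_cast; ring
    _ ≤ (T : ℤ) * ((A.card * (l + 1) + (l + 1) * l : ℕ) : ℤ) := by
        exact mul_le_mul_of_nonneg_left (by exact_mod_cast S2) (by positivity)
  have mainN : (A.card * (l + 1)) ^ 2 ≤ T * (A.card * (l + 1) + (l + 1) * l) := by exact_mod_cast main
  have final : (l + 1) * ((l + 1) * A.card ^ 2) ≤ (l + 1) * ((N + l) * (l + A.card)) := by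
    calc (l + 1) * ((l + 1) * A.card ^ 2) = (A.card * (l + 1)) ^ 2 := by ring
    _ ≤ T * (A.card * (l + 1) + (l + 1) * l) := mainN
    _ = (l + 1) * ((N + l) * (l + A.card)) := by rw [hT]; ring
  exact Nat.le_of_mul_le_mul_left final (Nat.succ_pos l)

private lemma core_ineq (s m : ℤ) (hs1 : 1 ≤ s) (hm1 : 1 ≤ m) (hms : m * m ≤ s) (hsm : s ≤ m * m + 2 * m) :
    3 * s ^ 2 * m ^ 2 + 2 * s ^ 3 + 8 * s ^ 2 + 7 * s < s ^ 3 * m + 11 * s ^ 2 * m + 22 * s * m + 2 := by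
  rcases le_or_gt 5 m with hm5 | hm5
  · have e1 : m * m * (m - 2) ≤ s * (m - 2) :=
      mul_le_mul_of_nonneg_right hms (by linarith)
    have e2 : s * (m - 2) - 3 * (m * m) ≥ m * m * (m - 5) := by nlinarith
    have e3 : (0 : ℤ) ≤ m * m * (m - 5) := by
      have : (0:ℤ) ≤ m * m := mul_self_nonneg m
      have : (0:ℤ) ≤ m - 5 := by linarith
      positivity
    have e4 : s ^ 2 * (s * (m - 2) - 3 * (m * m)) ≥ 0 :=
      mul_nonneg (by positivity) (by linarith)
    have f1 : 11 * s ^ 2 * (m - 1) ≥ 0 := by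
      have h1 : (0:ℤ) ≤ m - 1 := by linarith
      positivity
    have f2 : 22 * s * (m - 1) ≥ 0 := by
      have h1 : (0:ℤ) ≤ m - 1 := by linarith
      positivity
    nlinarith [e4, f1, f2, sq_nonneg s, hs1]
  · have hm4 : m ≤ 4 := by omega
    have hs24 : s ≤ 24 := by nlinarith
    interval_cases m <;> interval_cases s <;> norm_num


private lemma key_ineq (s m q P n l : ℤ) (hs1 : 1 ≤ s) (hm1 : 1 ≤ m)
    (hq3 : 2 * q + 5 = 3 * P)
    (hsq : s * s ≤ q) (hqs : q ≤ s * s + 2 * s)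
    (hms : m * m ≤ s) (hsm : s ≤ m * m + 2 * m)
    (hl : l + 1 = s * m) (hn : s + 3 ≤ n) :
    (P - 1 + l) * (l + n) < (l + 1) * n ^ 2 := by
  set T : ℤ := P - 1 + l with hTdef
  have hT3 : 3 * T = 2 * q - 1 + 3 * (s * m) := by linarith
  have hX : 3 * T ≤ 2 * (s * s) + 4 * s - 1 + 3 * (s * m) := by linarith
  have hsm1 : 1 ≤ s * m := by nlinarith
  -- step 1 : s*m*(s+3) - T > 0
  have step1 : 3 * (s * m * (s + 3) - T) ≥ (s + 1) ^ 2 := by nlinarith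
  have u0 : 0 ≤ s * m * (s + 3) - T := by nlinarith [sq_nonneg (s + 1)]
  -- step 2 : n * (s*m*n - T) ≥ (s+3) * (s*m*(s+3) - T)
  have hsmn : s * m * (s + 3) - T ≤ s * m * n - T := by nlinarith
  have step2 : (s + 3) * (s * m * (s + 3) - T) ≤ n * (s * m * n - T) :=
    mul_le_mul hn hsmn u0 (by linarith)
  -- step 3 : (s+3)*(s*m*(s+3) - T) > T * l
  have core := core_ineq s m hs1 hm1 hms hsm
  have step3 : T * l < (s + 3) * (s * m * (s + 3) - T) := by nlinarith
  -- combine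
  nlinarith [step2, step3]

/-- **Bound on `ν_p`.** For `p` an odd prime, `0 ≤ ν_p ≤ √(3p/2 - 39/16) + 5/4`. -/
theorem nuP_le {p : ℕ} [Fact p.Prime] (hp : Odd p) :
    0 ≤ (nuP p : ℝ) ∧ (nuP p : ℝ) ≤ Real.sqrt (3 * p / 2 - 39 / 16) + 5 / 4 := by
  classical
  refine ⟨Nat.cast_nonneg _, ?_⟩
  have hp2 : p.Prime := Fact.out
  obtain ⟨t, ht⟩ := hp
  have hp3 : 3 ≤ p := by
    have h2 := hp2.two_le
    rcases Nat.lt_or_ge p 3 with h | h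
    · interval_cases p
      · omega
    · exact h
  -- the extremal γ
  have hne : (Finset.univ.erase (1 : ZMod p)).Nonempty :=
    ⟨0, Finset.mem_erase.mpr ⟨zero_ne_one, Finset.mem_univ 0⟩⟩
  obtain ⟨γ, hγ, hγsup⟩ := Finset.exists_mem_eq_sup (Finset.univ.erase (1 : ZMod p)) hne
    (fun γ : ZMod p => ((Finset.Icc 1 (p - 2)).filter
      (fun i : ℕ => γ ^ (i + 1) = (i : ZMod p) * (1 - γ) + 1)).card)
  have hγ1 : γ ≠ 1 := (Finset.mem_erase.mp hγ).1
  have h1γ : (1 : ZMod p) - γ ≠ 0 := sub_ne_zero.mpr (Ne.symm hγ1)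
  set F := (Finset.Icc 1 (p - 2)).filter
      (fun i : ℕ => γ ^ (i + 1) = (i : ZMod p) * (1 - γ) + 1) with hF
  have hnu : nuP p = F.card := hγsup
  set A : Finset ℕ := insert (p - 1) F with hA
  have hpF : p - 1 ∉ F := by
    intro h
    have := (Finset.mem_Icc.mp (Finset.mem_filter.mp h).1).2
    omega
  have hcard : A.card = F.card + 1 := Finset.card_insert_of_notMem hpF
  have hmem : ∀ i ∈ A, γ ^ (i + 1) = (i : ZMod p) * (1 - γ) + 1 := by
    intro i hi
    rcases Finset.mem_insert.mp hi with h | h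
    · subst h
      have h1 : p - 1 + 1 = p := by omega
      have h2 : ((p - 1 : ℕ) : ZMod p) = -1 := by
        rw [Nat.cast_sub (by omega : 1 ≤ p), ZMod.natCast_self]
        ring
      rw [h1, ZMod.pow_card, h2]
      ring
    · exact (Finset.mem_filter.mp h).2
  have hbound : ∀ a ∈ A, 1 ≤ a ∧ a ≤ p - 1 := by
    intro a ha
    rcases Finset.mem_insert.mp ha with h | h
    · omega
    · have := Finset.mem_Icc.mp (Finset.mem_filter.mp h).1
      omega
  -- the Sidon property
  have hsidon : ∀ a ∈ A, ∀ b ∈ A, ∀ c ∈ A, ∀ d ∈ A,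
      a < b → c < d → b - a = d - c → a = c := by
    intro a ha b hb c hc d hd hab hcd hdiff
    set d0 := b - a with hd0
    have hbad : b = a + d0 := by omega
    have hdad : d = c + d0 := by omega
    have E1 : γ ^ (a + 1) * (γ ^ d0 - 1) = (d0 : ZMod p) * (1 - γ) := by
      have h1 := hmem a ha
      have h2 := hmem b hb
      rw [hbad] at h2
      push_cast at h2
      rw [show a + d0 + 1 = (a + 1) + d0 from by ring, pow_add] at h2
      linear_combination h2 - h1
    have E2 : γ ^ (c + 1) * (γ ^ d0 - 1) = (d0 : ZMod p) * (1 - γ) := by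
      have h1 := hmem c hc
      have h2 := hmem d hd
      rw [hdad] at h2
      push_cast at h2
      rw [show c + d0 + 1 = (c + 1) + d0 from by ring, pow_add] at h2
      linear_combination h2 - h1
    have hd0p : 1 ≤ d0 ∧ d0 ≤ p - 2 := by
      have h1 := hbound a ha
      have h2 := hbound b hb
      omega
    have hpow_ne : γ ^ d0 - 1 ≠ 0 := by
      intro h0
      rw [h0, mul_zero] at E1
      have : (d0 : ZMod p) = 0 := by
        rcases mul_eq_zero.mp E1.symm with h | h
        · exact h
        · exact absurd h h1γ
      have hdvd : p ∣ d0 := (ZMod.natCast_eq_zero_iff _ _).mp this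
      have := Nat.le_of_dvd (by omega) hdvd
      omega
    have hpows : γ ^ (a + 1) = γ ^ (c + 1) :=
      mul_right_cancel₀ hpow_ne (E1.trans E2.symm)
    have hac : (a : ZMod p) * (1 - γ) = (c : ZMod p) * (1 - γ) := by
      have h1 := hmem a ha
      have h2 := hmem c hc
      rw [h1, h2] at hpows
      linear_combination hpows
    have hacc : (a : ZMod p) = (c : ZMod p) := mul_right_cancel₀ h1γ hac
    have hmod : a % p = c % p := (ZMod.natCast_eq_natCast_iff' a c p).mp hacc
    have ha' := hbound a ha
    have hc' := hbound c hc
    rw [Nat.mod_eq_of_lt (by omega), Nat.mod_eq_of_lt (by omega)] at hmod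
    exact hmod
  -- numeric part
  set q : ℕ := 3 * t - 1 with hqdef
  have hq : 2 * q + 5 = 3 * p := by omega
  set s : ℕ := Nat.sqrt q with hsdef
  set m : ℕ := Nat.sqrt s with hmdef
  have hq2 : 2 ≤ q := by omega
  have hs1 : 1 ≤ s := Nat.sqrt_pos.mpr (by omega)
  have hm1 : 1 ≤ m := Nat.sqrt_pos.mpr (by omega)
  have hsq : s * s ≤ q := Nat.sqrt_le q
  have hqs : q ≤ s * s + 2 * s := by
    have h := Nat.lt_succ_sqrt q
    rw [Nat.succ_eq_add_one] at h
    have he : (Nat.sqrt q + 1) * (Nat.sqrt q + 1) = Nat.sqrt q * Nat.sqrt q + 2 * Nat.sqrt q + 1 := by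
      ring
    rw [hsdef]
    omega
  have hms : m * m ≤ s := Nat.sqrt_le s
  have hsm : s ≤ m * m + 2 * m := by
    have h := Nat.lt_succ_sqrt s
    rw [Nat.succ_eq_add_one] at h
    have he : (Nat.sqrt s + 1) * (Nat.sqrt s + 1) = Nat.sqrt s * Nat.sqrt s + 2 * Nat.sqrt s + 1 := by
      ring
    rw [hmdef]
    omega
  -- main bound on F.card
  have hk : F.card ≤ s + 1 := by
    by_contra hk
    push_neg at hk
    have hn : s + 3 ≤ A.card := by omega
    have hsm1 : 1 ≤ s * m := Nat.mul_le_mul hs1 hm1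
    set l : ℕ := s * m - 1 with hldef
    have hl : l + 1 = s * m := by omega
    have ET := sidon_ET (p - 1) l A hbound hsidon
    have ETZ : ((l : ℤ) + 1) * (A.card : ℤ) ^ 2 ≤ ((p : ℤ) - 1 + l) * ((l : ℤ) + A.card) := by
      have hc1 : ((p - 1 + l : ℕ) : ℤ) = (p : ℤ) - 1 + l := by
        push_cast [Nat.cast_sub (by omega : 1 ≤ p)]
        ring
      calc ((l : ℤ) + 1) * (A.card : ℤ) ^ 2 = (((l + 1) * A.card ^ 2 : ℕ) : ℤ) := by push_cast; ring
        _ ≤ (((p - 1 + l) * (l + A.card) : ℕ) : ℤ) := by exact_mod_cast ET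
        _ = ((p : ℤ) - 1 + l) * ((l : ℤ) + A.card) := by push_cast [Nat.cast_sub (by omega : 1 ≤ p)]; ring
    have KEY := key_ineq (s : ℤ) (m : ℤ) (q : ℤ) (p : ℤ) (A.card : ℤ) (l : ℤ)
      (by exact_mod_cast hs1) (by exact_mod_cast hm1)
      (by exact_mod_cast hq)
      (by exact_mod_cast hsq) (by exact_mod_cast hqs)
      (by exact_mod_cast hms) (by exact_mod_cast hsm)
      (by exact_mod_cast hl) (by exact_mod_cast hn)
    linarith
  -- conclude over ℝ
  have hsR : (s : ℝ) ≤ Real.sqrt q := by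
    rw [show (s : ℝ) = Real.sqrt ((s : ℝ) ^ 2) from (Real.sqrt_sq (by positivity)).symm]
    apply Real.sqrt_le_sqrt
    have h : ((s * s : ℕ) : ℝ) ≤ (q : ℝ) := Nat.cast_le.mpr hsq
    push_cast at h
    nlinarith [h]
  have hqR : Real.sqrt q ≤ Real.sqrt (3 * p / 2 - 39 / 16) := by
    apply Real.sqrt_le_sqrt
    have : (2 * q + 5 : ℝ) = 3 * p := by exact_mod_cast hq
    linarith
  have hkR : (nuP p : ℝ) ≤ (s : ℝ) + 1 := by
    rw [hnu]
    exact_mod_cast hk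
  linarith
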